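/- arXiv:1405.5155 — 2 statements merged into one kernel-verified Lean document; each statement's English description precedes it below -/
import Mathlib

section
/- Let R be a Frobenius algebra over a field k with nondegenerate associative bilinear form ⟨a,b⟩ = ε(ab) and Nakayama automorphism ν (so ⟨a,b⟩ = ⟨b, ν(a)⟩). For f ∈ C^n(R) define Δ_i f ∈ C^{n-1}(R) by ⟨Δ_i f(a_1⊗···⊗a_{n-1}), a_n⟩ = ⟨f(a_i⊗···⊗a_n⊗ν(a_1)⊗···⊗ν(a_{i-1})), 1⟩, and Δ f = Σ_{i=1}^n (−1)^{i(n-1)} Δ_i f. Then for every f ∈ C^n(R): δ_{n-1}(Δ f) + Δ(δ_n f) = f^ν − f, where f^ν(a_1⊗···⊗a_n) = ν^{-1}(f(ν a_1 ⊗···⊗ ν a_n)). -/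
set_option maxHeartbeats 1000000
set_option linter.unusedTactic false
set_option linter.unreachableTactic false


open Finset

variable {k R : Type*}

/-- The argument tuple for the `i`-th inner face: multiply `a i` and `a (i+1)`. -/
def mergeAt [Ring R] {n : ℕ} (a : Fin (n + 1) → R) (i : Fin n) : Fin n → R :=
  fun j =>
    if j.val < i.val then a j.castSucc
    else if j.val = i.val then a j.castSucc * a j.succ
    else a j.succ

/-- The Hochschild differential `δ_n` on (raw) Hochschild cochains. -/
def hdiff [Ring R] {n : ℕ} (f : (Fin n → R) → R) : (Fin (n + 1) → R) → R :=
  fun a =>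
    a 0 * f (fun j => a j.succ)
      + (∑ i : Fin n, ((-1 : R) ^ (i.val + 1)) * f (mergeAt a i))
      + ((-1 : R) ^ (n + 1)) * (f (fun j => a j.castSucc) * a (Fin.last n))

/-- The twist `f ↦ f^σ` of a cochain by an algebra automorphism `σ`. -/
def twist [CommRing k] [Ring R] [Algebra k R] {n : ℕ} (σ : R ≃ₐ[k] R)
    (f : (Fin n → R) → R) : (Fin n → R) → R :=
  fun a => σ.symm (f (fun j => σ (a j)))

/-- The cyclic argument arrangement `a_i ⊗ ⋯ ⊗ a_{n-1} ⊗ x ⊗ ν a_1 ⊗ ⋯ ⊗ ν a_{i-1}`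
(0-based: shift by `i`, insert `x` after the tail of `a`, apply `ν` to the wrapped part). -/
def cycArr [Ring R] {n : ℕ} (ν : R → R) (a : Fin n → R) (x : R) (i : Fin (n + 1)) :
    Fin (n + 1) → R :=
  fun j =>
    if h1 : i.val + j.val < n then a ⟨i.val + j.val, h1⟩
    else if h2 : i.val + j.val = n then x
    else ν (a ⟨i.val + j.val - (n + 1), by
      have := i.isLt; have := j.isLt; omega⟩)

/-- `Df` is the Tradler operator `Δ f` of the (n+1)-cochain `f`, characterized via the
Frobenius form `⟨a,b⟩ = ε(ab)`:
`⟨Δf(a_1 ⊗ ⋯ ⊗ a_{n-1}), a_n⟩ = Σ_i (−1)^{i(n-1)} ⟨f(a_i ⊗ ⋯ ⊗ a_n ⊗ ν a_1 ⊗ ⋯ ⊗ ν a_{i-1}), 1⟩`. -/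
def IsDeltaOf [CommRing k] [Ring R] [Algebra k R] {n : ℕ} (ε : R →ₗ[k] k) (ν : R → R)
    (f : (Fin (n + 1) → R) → R) (Df : (Fin n → R) → R) : Prop :=
  ∀ (a : Fin n → R) (x : R),
    ε (Df a * x)
      = ∑ i : Fin (n + 1), ((-1 : k) ^ ((i.val + 1) * n)) * ε (f (cycArr ν a x i))

section TupleLemmas
variable [Ring R] {n : ℕ} (ν : R → R) (a : Fin (n + 1) → R) (x : R)

lemma DH.tup1 (iv jv : ℕ) (hi : iv < n + 2) (hj : jv < n + 1) (h : iv + jv < n) :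
    mergeAt (cycArr ν a x ⟨iv, hi⟩) ⟨jv, hj⟩
      = cycArr ν (mergeAt a ⟨iv + jv, h⟩) x ⟨iv, by omega⟩ := by
  funext t; rcases t with ⟨tv, ht⟩
  simp only [mergeAt, cycArr, Fin.castSucc_mk, Fin.succ_mk]
  split_ifs <;> first
    | omega
    | rfl
    | exact congrArg a (Fin.ext (by try simp only [Fin.val_mk]; omega))
    | exact congrArg ν (congrArg a (Fin.ext (by try simp only [Fin.val_mk]; omega)))
    | exact congrArg₂ (· * ·) (congrArg a (Fin.ext (by try simp only [Fin.val_mk]; omega)))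
        (congrArg a (Fin.ext (by try simp only [Fin.val_mk]; omega)))

lemma DH.tup2 (iv jv : ℕ) (hi : iv < n + 2) (hj : jv < n + 1) (h : iv + jv = n) :
    mergeAt (cycArr ν a x ⟨iv, hi⟩) ⟨jv, hj⟩
      = cycArr ν (fun s => a s.castSucc) (a (Fin.last n) * x) ⟨iv, by omega⟩ := by
  funext t; rcases t with ⟨tv, ht⟩
  simp only [mergeAt, cycArr, Fin.castSucc_mk, Fin.succ_mk]
  split_ifs <;> first
    | omega
    | rfl
    | exact congrArg a (Fin.ext (by try simp only [Fin.val_mk, Fin.val_last, Fin.coe_castSucc]; omega))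
    | exact congrArg ν (congrArg a (Fin.ext (by try simp only [Fin.val_mk, Fin.val_last, Fin.coe_castSucc]; omega)))
    | exact congrArg₂ (· * ·) (congrArg a (Fin.ext (by try simp only [Fin.val_mk, Fin.val_last, Fin.coe_castSucc]; omega))) rfl

lemma DH.tup3 (iv jv : ℕ) (hi : iv < n + 2) (hj : jv < n + 1) (h : iv + jv = n + 1)
    (h1 : 1 ≤ iv) :
    mergeAt (cycArr ν a x ⟨iv, hi⟩) ⟨jv, hj⟩
      = cycArr ν (fun s => a s.succ) (x * ν (a 0)) ⟨iv - 1, by omega⟩ := by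
  funext t; rcases t with ⟨tv, ht⟩
  simp only [mergeAt, cycArr, Fin.castSucc_mk, Fin.succ_mk]
  split_ifs <;> first
    | omega
    | rfl
    | exact congrArg a (Fin.ext (by try simp only [Fin.val_mk, Fin.val_succ, Fin.val_zero]; omega))
    | exact congrArg ν (congrArg a (Fin.ext (by try simp only [Fin.val_mk, Fin.val_succ, Fin.val_zero]; omega)))
    | exact congrArg₂ (· * ·) rfl (congrArg ν (congrArg a (Fin.ext (by try simp only [Fin.val_mk, Fin.val_succ, Fin.val_zero]; omega))))

lemma DH.tup4 (hm : ∀ u v : R, ν (u * v) = ν u * ν v)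
    (iv jv : ℕ) (hi : iv < n + 2) (hj : jv < n + 1) (h : n + 2 ≤ iv + jv) :
    mergeAt (cycArr ν a x ⟨iv, hi⟩) ⟨jv, hj⟩
      = cycArr ν (mergeAt a ⟨iv + jv - n - 1 - 1, by omega⟩) x ⟨iv - 1, by omega⟩ := by
  funext t; rcases t with ⟨tv, ht⟩
  simp only [mergeAt, cycArr, Fin.castSucc_mk, Fin.succ_mk]
  split_ifs <;> first
    | omega
    | rfl
    | exact congrArg a (Fin.ext (by try simp only [Fin.val_mk]; omega))
    | exact congrArg ν (congrArg a (Fin.ext (by try simp only [Fin.val_mk]; omega)))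
    | (rw [hm]; exact congrArg₂ (· * ·)
        (congrArg ν (congrArg a (Fin.ext (by try simp only [Fin.val_mk]; omega))))
        (congrArg ν (congrArg a (Fin.ext (by try simp only [Fin.val_mk]; omega)))))

end TupleLemmas

def DH.phiFun (n : ℕ) : Fin (n + 2) × Fin (n + 1) → Fin (n + 2) × Fin (n + 1)
  | (⟨iv, hi⟩, ⟨jv, hj⟩) =>
    if h : iv + jv < n then (⟨iv + jv + 1, by omega⟩, ⟨iv, by omega⟩)
    else if h2 : iv + jv = n then (⟨n + 1, by omega⟩, ⟨iv, by omega⟩)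
    else if h3 : iv + jv = n + 1 then (⟨0, by omega⟩, ⟨iv - 1, by omega⟩)
    else (⟨iv + jv - n - 1, by omega⟩, ⟨iv - 1, by omega⟩)

def DH.psiFun (n : ℕ) : Fin (n + 2) × Fin (n + 1) → Fin (n + 2) × Fin (n + 1)
  | (⟨pv, hp⟩, ⟨qv, hq⟩) =>
    if h : pv = 0 then (⟨qv + 1, by omega⟩, ⟨n - qv, by omega⟩)
    else if h2 : pv = n + 1 then (⟨qv, by omega⟩, ⟨n - qv, by omega⟩)
    else if h3 : qv < pv then (⟨qv, by omega⟩, ⟨pv - 1 - qv, by omega⟩)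
    else (⟨qv + 1, by omega⟩, ⟨pv + n - qv, by omega⟩)

def DH.phiEquiv (n : ℕ) : (Fin (n + 2) × Fin (n + 1)) ≃ (Fin (n + 2) × Fin (n + 1)) where
  toFun := DH.phiFun n
  invFun := DH.psiFun n
  left_inv := by
    rintro ⟨⟨iv, hi⟩, ⟨jv, hj⟩⟩
    simp only [DH.phiFun]
    split_ifs
    all_goals simp only [DH.psiFun, Fin.val_mk]
    all_goals split_ifs
    all_goals simp_all [Prod.ext_iff, Fin.ext_iff, Fin.val_mk]
    all_goals omega
  right_inv := by
    rintro ⟨⟨pv, hp⟩, ⟨qv, hq⟩⟩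
    simp only [DH.psiFun]
    split_ifs
    all_goals simp only [DH.phiFun, Fin.val_mk]
    all_goals split_ifs
    all_goals simp_all [Prod.ext_iff, Fin.ext_iff, Fin.val_mk]
    all_goals omega

lemma DH.neg_one_pow_eq_neg {k : Type*} [Field k] {a b : ℕ} (h : ¬ Even (a + b)) :
    (-1:k)^a = -(-1:k)^b := by
  have h1 : (-1:k)^(a+b) = -1 := Odd.neg_one_pow (Nat.odd_iff.mpr (by rw [Nat.even_iff] at h; omega))
  calc (-1:k)^a = (-1:k)^(a+b+b) := by
        rw [show a+b+b = a+(b+b) from by omega, pow_add, Even.neg_one_pow ⟨b, rfl⟩, mul_one]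
    _ = (-1:k)^(a+b) * (-1:k)^b := by rw [← pow_add]
    _ = -(-1:k)^b := by rw [h1]; ring

lemma DH.neg_one_pow_eq_pos {k : Type*} [Field k] {a b : ℕ} (h : Even (a + b)) :
    (-1:k)^a = (-1:k)^b := by
  have h1 : (-1:k)^(a+b) = 1 := Even.neg_one_pow h
  calc (-1:k)^a = (-1:k)^(a+b+b) := by
        rw [show a+b+b = a+(b+b) from by omega, pow_add, Even.neg_one_pow ⟨b, rfl⟩, mul_one]
    _ = (-1:k)^(a+b) * (-1:k)^b := by rw [← pow_add]
    _ = (-1:k)^b := by rw [h1, one_mul]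

section Terms
variable [Field k] [Ring R] [Algebra k R] (ε : R →ₗ[k] k) (ν : R → R) {n : ℕ}
  (F : (Fin (n + 1) → R) → R) (a : Fin (n + 1) → R) (x : R)

def DH.Vterm (p : Fin (n + 2)) (q : Fin (n + 1)) : k :=
  if h0 : p.val = 0 then
    (-1 : k) ^ ((q.val + 1) * n) * ε (F (cycArr ν (fun j => a j.succ) (x * ν (a 0)) q))
  else if h1 : p.val < n + 1 then
    (-1 : k) ^ (p.val + (q.val + 1) * n)
      * ε (F (cycArr ν (mergeAt a ⟨p.val - 1, by omega⟩) x q))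
  else
    (-1 : k) ^ ((n + 1) + (q.val + 1) * n)
      * ε (F (cycArr ν (fun j => a j.castSucc) (a (Fin.last n) * x) q))

def DH.Bterm (i : Fin (n + 2)) (j : Fin (n + 1)) : k :=
  (-1 : k) ^ ((i.val + 1) * (n + 1) + (j.val + 1)) * ε (F (mergeAt (cycArr ν a x i) j))

def DH.Aterm (i : Fin (n + 2)) : k :=
  (-1 : k) ^ ((i.val + 1) * (n + 1))
    * ε (cycArr ν a x i 0 * F (fun j => cycArr ν a x i j.succ))

def DH.Cterm (i : Fin (n + 2)) : k :=
  (-1 : k) ^ ((i.val + 1) * (n + 1) + (n + 2))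
    * ε (F (fun j => cycArr ν a x i j.castSucc) * cycArr ν a x i (Fin.last (n + 1)))

lemma DH.B_eq_negV (hm : ∀ u v : R, ν (u * v) = ν u * ν v)
    (z : Fin (n + 2) × Fin (n + 1)) :
    DH.Bterm ε ν F a x z.1 z.2
      = - DH.Vterm ε ν F a x (DH.phiFun n z).1 (DH.phiFun n z).2 := by
  obtain ⟨⟨iv, hi⟩, ⟨jv, hj⟩⟩ := z
  simp only [DH.phiFun, DH.Bterm, Fin.val_mk]
  split_ifs with h1 h2 h3
  · -- iv + jv < n
    have ht := DH.tup1 ν a x iv jv hi hj h1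
    simp only [DH.Vterm, Fin.val_mk, Nat.add_sub_cancel]
    rw [dif_neg (by omega), dif_pos (by omega)]
    rw [ht, DH.neg_one_pow_eq_neg (a := (iv+1)*(n+1)+(jv+1)) (b := (iv+jv+1) + (iv+1)*n)
      (by simp only [Nat.even_add, Nat.even_mul]; simp [Nat.even_iff]; try first | omega | tauto), neg_mul]
  · -- iv + jv = n
    have ht := DH.tup2 ν a x iv jv hi hj h2
    simp only [DH.Vterm, Fin.val_mk]
    rw [dif_neg (by omega), dif_neg (by omega)]
    rw [ht, DH.neg_one_pow_eq_neg (a := (iv+1)*(n+1)+(jv+1)) (b := (n+1) + (iv+1)*n)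
      (by simp only [Nat.even_add, Nat.even_mul]; simp [Nat.even_iff]; try first | omega | tauto), neg_mul]
  · -- iv + jv = n + 1
    have ht := DH.tup3 ν a x iv jv hi hj h3 (by omega)
    simp only [DH.Vterm, Fin.val_mk]
    rw [dif_pos trivial]
    rw [ht, DH.neg_one_pow_eq_neg (a := (iv+1)*(n+1)+(jv+1)) (b := (iv-1+1) * n)
      (by simp only [Nat.even_add, Nat.even_mul]; simp [Nat.even_iff]; try first | omega | tauto), neg_mul]
  · -- n + 2 ≤ iv + jv
    have ht := DH.tup4 ν a x hm iv jv hi hj (by omega)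
    simp only [DH.Vterm, Fin.val_mk]
    rw [dif_neg (by omega), dif_pos (by omega)]
    rw [ht, DH.neg_one_pow_eq_neg (a := (iv+1)*(n+1)+(jv+1)) (b := (iv+jv-n-1) + (iv-1+1)*n)
      (by simp only [Nat.even_add, Nat.even_mul]; simp [Nat.even_iff]; try first | omega | tauto), neg_mul]

end Terms


lemma DH.eps_pow_mul [Field k] [Ring R] [Algebra k R] (ε : R →ₗ[k] k) (m : ℕ) (w : R) :
    ε ((-1:R)^m * w) = (-1:k)^m * ε w := by
  have h : ((-1:R)^m) * w = ((-1:k)^m) • w := by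
    rw [Algebra.smul_def, map_pow, map_neg, map_one]
  rw [h, map_smul, smul_eq_mul]

section Main
variable [Field k] [Ring R] [Algebra k R] (ε : R →ₗ[k] k) (ν : R ≃ₐ[k] R)
  {n : ℕ} (F : (Fin (n + 1) → R) → R) (a : Fin (n + 1) → R) (x : R)

lemma DH.L1 (hν : ∀ a b : R, ε (a * b) = ε (b * ν a))
    (Df : (Fin n → R) → R) (hDf : IsDeltaOf ε (⇑ν) F Df) :
    ε (hdiff Df a * x) = ∑ p : Fin (n + 2), ∑ q : Fin (n + 1), DH.Vterm ε (⇑ν) F a x p q := by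
  have t0 : ε ((a 0 * Df (fun j => a j.succ)) * x)
      = ∑ q : Fin (n + 1), DH.Vterm ε (⇑ν) F a x 0 q := by
    rw [mul_assoc, hν (a 0), mul_assoc, hDf]
    refine Finset.sum_congr rfl fun q _ => ?_
    simp only [DH.Vterm, Fin.val_zero]
    symm; exact dif_pos rfl
  have tm : ∀ i : Fin n, ε (((-1:R)^(i.val+1) * Df (mergeAt a i)) * x)
      = ∑ q : Fin (n + 1), DH.Vterm ε (⇑ν) F a x i.castSucc.succ q := by
    intro i
    rw [mul_assoc, DH.eps_pow_mul, hDf, Finset.mul_sum]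
    refine Finset.sum_congr rfl fun q _ => ?_
    simp only [DH.Vterm, Fin.val_succ, Fin.coe_castSucc, Nat.add_sub_cancel]
    rw [dif_neg (by omega), dif_pos (by omega), ← mul_assoc, ← pow_add]
  have tl : ε (((-1:R)^(n+1) * (Df (fun j => a j.castSucc) * a (Fin.last n))) * x)
      = ∑ q : Fin (n + 1), DH.Vterm ε (⇑ν) F a x (Fin.last n).succ q := by
    rw [mul_assoc, DH.eps_pow_mul, mul_assoc, hDf, Finset.mul_sum]
    refine Finset.sum_congr rfl fun q _ => ?_
    simp only [DH.Vterm, Fin.val_succ, Fin.val_last]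
    rw [dif_neg (by omega), dif_neg (by omega), ← mul_assoc, ← pow_add]
  rw [Fin.sum_univ_succ (f := fun p => ∑ q : Fin (n + 1), DH.Vterm ε (⇑ν) F a x p q)]
  rw [Fin.sum_univ_castSucc (f := fun i : Fin (n+1) => ∑ q : Fin (n + 1), DH.Vterm ε (⇑ν) F a x i.succ q)]
  simp only [hdiff]
  rw [add_mul, add_mul, map_add, map_add, Finset.sum_mul, map_sum]
  rw [t0, tl, Finset.sum_congr rfl (fun i _ => tm i)]
  ring

lemma DH.L2 (Ddf : (Fin (n + 1) → R) → R) (hDdf : IsDeltaOf ε (⇑ν) (hdiff F) Ddf) :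
    ε (Ddf a * x)
      = (∑ i : Fin (n + 2), DH.Aterm ε (⇑ν) F a x i)
        + (∑ i : Fin (n + 2), ∑ j : Fin (n + 1), DH.Bterm ε (⇑ν) F a x i j)
        + (∑ i : Fin (n + 2), DH.Cterm ε (⇑ν) F a x i) := by
  rw [hDdf a x]
  rw [← Finset.sum_add_distrib, ← Finset.sum_add_distrib]
  refine Finset.sum_congr rfl fun i _ => ?_
  simp only [hdiff]
  rw [map_add, map_add, map_sum, mul_add, mul_add, Finset.mul_sum]
  congr 1
  · congr 1
    refine Finset.sum_congr rfl fun j _ => ?_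
    rw [DH.eps_pow_mul, ← mul_assoc, ← pow_add]
    rfl
  · rw [DH.eps_pow_mul, ← mul_assoc, ← pow_add]
    rfl

lemma DH.L3 :
    (∑ i : Fin (n + 2), ∑ j : Fin (n + 1), DH.Bterm ε (⇑ν) F a x i j)
      = - ∑ p : Fin (n + 2), ∑ q : Fin (n + 1), DH.Vterm ε (⇑ν) F a x p q := by
  rw [← Fintype.sum_prod_type (f := fun z : Fin (n+2) × Fin (n+1) => DH.Bterm ε (⇑ν) F a x z.1 z.2)]
  rw [← Fintype.sum_prod_type (f := fun z : Fin (n+2) × Fin (n+1) => DH.Vterm ε (⇑ν) F a x z.1 z.2)]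
  rw [← Finset.sum_neg_distrib]
  exact Fintype.sum_equiv (DH.phiEquiv n) _ _
    (fun z => DH.B_eq_negV ε (⇑ν) F a x (fun u v => map_mul ν u v) z)

end Main

section Main2
variable [Field k] [Ring R] [Algebra k R] (ε : R →ₗ[k] k) (ν : R ≃ₐ[k] R)
  {n : ℕ} (F : (Fin (n + 1) → R) → R) (a : Fin (n + 1) → R) (x : R)

lemma DH.L4 (hν : ∀ a b : R, ε (a * b) = ε (b * ν a)) (i : Fin (n + 1)) :
    DH.Aterm ε (⇑ν) F a x i.castSucc = - DH.Cterm ε (⇑ν) F a x i.succ := by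
  have e1 : cycArr (⇑ν) a x i.castSucc 0 = a ⟨i.val, by omega⟩ := by
    simp only [cycArr, Fin.coe_castSucc, Fin.val_zero]
    refine (dif_pos (by omega)).trans ?_
    exact congrArg a (Fin.ext (by try simp only [Fin.val_mk]; omega))
  have e2 : cycArr (⇑ν) a x i.succ (Fin.last (n + 1)) = ν (a ⟨i.val, by omega⟩) := by
    simp only [cycArr, Fin.val_succ, Fin.val_last]
    rw [dif_neg (by omega), dif_neg (by omega)]
    exact congrArg ν (congrArg a (Fin.ext (by try simp only [Fin.val_mk]; omega)))
  have e3 : (fun j : Fin (n + 1) => cycArr (⇑ν) a x i.succ j.castSucc)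
      = (fun j : Fin (n + 1) => cycArr (⇑ν) a x i.castSucc j.succ) := by
    funext t; rcases t with ⟨tv, ht⟩
    simp only [cycArr, Fin.val_succ, Fin.coe_castSucc, Fin.castSucc_mk, Fin.succ_mk]
    split_ifs <;> first
      | omega
      | rfl
      | exact congrArg a (Fin.ext (by try simp only [Fin.val_mk]; omega))
      | exact congrArg ν (congrArg a (Fin.ext (by try simp only [Fin.val_mk]; omega)))
  simp only [DH.Aterm, DH.Cterm, Fin.coe_castSucc, Fin.val_succ]
  rw [hν, e1, e2, e3]
  rw [DH.neg_one_pow_eq_neg (a := (i.val+1)*(n+1)) (b := (i.val+1+1)*(n+1) + (n+2))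
    (by simp only [Nat.even_add, Nat.even_mul]; simp [Nat.even_iff]; try first | omega | tauto), neg_mul]

lemma DH.L5 (hν : ∀ a b : R, ε (a * b) = ε (b * ν a)) :
    DH.Aterm ε (⇑ν) F a x (Fin.last (n + 1)) = ε (twist ν F a * x) := by
  have e4 : cycArr (⇑ν) a x (Fin.last (n + 1)) 0 = x := by
    simp only [cycArr, Fin.val_last, Fin.val_zero]
    exact (dif_neg (show ¬ (n + 1 + 0 < n + 1) by omega)).trans (dif_pos rfl)
  have e5 : (fun j : Fin (n + 1) => cycArr (⇑ν) a x (Fin.last (n + 1)) j.succ)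
      = fun j => ν (a j) := by
    funext t; rcases t with ⟨tv, ht⟩
    simp only [cycArr, Fin.val_last, Fin.val_succ]
    rw [dif_neg (by omega), dif_neg (by omega)]
    exact congrArg ν (congrArg a (Fin.ext (by try simp only [Fin.val_mk]; omega)))
  simp only [DH.Aterm, Fin.val_last]
  rw [e4, e5, twist]
  rw [hν (ν.symm (F fun j => ν (a j))) x, AlgEquiv.apply_symm_apply]
  rw [DH.neg_one_pow_eq_pos (a := (n+1+1)*(n+1)) (b := 0)
    (by simp only [Nat.even_add, Nat.even_mul]; simp [Nat.even_iff]; try first | omega | tauto), pow_zero, one_mul]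

lemma DH.L6 : DH.Cterm ε (⇑ν) F a x 0 = - ε (F a * x) := by
  have e6 : cycArr (⇑ν) a x 0 (Fin.last (n + 1)) = x := by
    simp only [cycArr, Fin.val_last, Fin.val_zero]
    exact (dif_neg (by omega)).trans (dif_pos (by omega))
  have e7 : (fun j : Fin (n + 1) => cycArr (⇑ν) a x 0 j.castSucc) = a := by
    funext t; rcases t with ⟨tv, ht⟩
    simp only [cycArr, Fin.val_zero, Fin.coe_castSucc, Fin.castSucc_mk]
    refine (dif_pos (by omega)).trans ?_
    exact congrArg a (Fin.ext (by try simp only [Fin.val_mk]; omega))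
  simp only [DH.Cterm, Fin.val_zero]
  rw [e6, e7]
  rw [DH.neg_one_pow_eq_neg (a := (0+1)*(n+1) + (n+2)) (b := 0)
    (by simp only [Nat.even_add, Nat.even_mul]; simp [Nat.even_iff]; try first | omega | tauto), pow_zero, neg_mul, one_mul]


end Main2

/-- the homotopy formula `δ_{n-1}(Δ f) + Δ(δ_n f) = f^ν − f`
for a Frobenius algebra `R` with Nakayama automorphism `ν`. -/
theorem delta_homotopy [Field k] [Ring R] [Algebra k R] [FiniteDimensional k R]
    {n : ℕ} (ε : R →ₗ[k] k)
    (hnd : ∀ a : R, (∀ b : R, ε (a * b) = 0) → a = 0)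
    (ν : R ≃ₐ[k] R) (hν : ∀ a b : R, ε (a * b) = ε (b * ν a))
    (f : MultilinearMap k (fun _ : Fin (n + 1) => R) R)
    (Df : (Fin n → R) → R) (hDf : IsDeltaOf ε (⇑ν) (⇑f) Df)
    (Ddf : (Fin (n + 1) → R) → R) (hDdf : IsDeltaOf ε (⇑ν) (hdiff (⇑f)) Ddf) :
    ∀ a : Fin (n + 1) → R, hdiff Df a + Ddf a = twist ν (⇑f) a - f a := by
  intro a
  have key : ∀ x : R, ε ((hdiff Df a + Ddf a) * x) = ε ((twist ν (⇑f) a - f a) * x) := by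
    intro x
    rw [add_mul, map_add, DH.L1 ε ν (⇑f) a x hν Df hDf, DH.L2 ε ν (⇑f) a x Ddf hDdf,
      DH.L3 ε ν (⇑f) a x]
    rw [Fin.sum_univ_castSucc (f := fun i : Fin (n+2) => DH.Aterm ε (⇑ν) (⇑f) a x i)]
    rw [Fin.sum_univ_succ (f := fun i : Fin (n+2) => DH.Cterm ε (⇑ν) (⇑f) a x i)]
    rw [Finset.sum_congr rfl (fun i _ => DH.L4 ε ν (⇑f) a x hν i)]
    rw [DH.L5 ε ν (⇑f) a x hν, DH.L6 ε ν (⇑f) a x]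
    rw [Finset.sum_neg_distrib, sub_mul, map_sub]
    ring
  have h0 : hdiff Df a + Ddf a - (twist ν (⇑f) a - f a) = 0 :=
    hnd _ (fun b => by rw [sub_mul, map_sub, key b, sub_self])
  exact sub_eq_zero.mp h0
end

section
/- Let R be a Frobenius algebra with form ⟨,⟩ and Nakayama automorphism ν. For f ∈ C^n(R)^ν (i.e. f^ν = f), the operator Δ defined via the Frobenius form maps C^n(R)^ν into C^{n-1}(R)^ν and satisfies δ_{n-1}(Δf) = −Δ(δ_n f); hence Δ induces a well-defined map HH^n(R)^{ν↑} → HH^{n-1}(R)^{ν↑}. -/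
open Finset

variable {k R : Type*}

/- ---------------------------------------------------------------------------
   Auxiliary lemmas
--------------------------------------------------------------------------- -/

theorem aux_a {R : Type*} {m : ℕ} (a : Fin m → R) (v1 v2 : ℕ) (p1 : v1 < m) (p2 : v2 < m)
    (h : v1 = v2) : a ⟨v1, p1⟩ = a ⟨v2, p2⟩ := by subst h; rfl

theorem npo' {K : Type*} [Monoid K] [HasDistribNeg K] {A B c : ℕ} (h : A = B + 2 * c + 1) :
    (-1 : K) ^ A = -(-1 : K) ^ B := by
  subst h
  rw [pow_succ, pow_add, pow_mul, neg_one_sq, one_pow, mul_one, mul_neg_one]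

theorem sgnB1 {K : Type*} [Monoid K] [HasDistribNeg K] (i q n : ℕ) :
    (-1 : K) ^ ((i + 1) * (n + 1)) * (-1 : K) ^ (q + 1)
      = -((-1 : K) ^ (i + q + 1) * (-1 : K) ^ ((i + 1) * n)) := by
  rw [← pow_add, ← pow_add]
  exact npo' (c := 0) (by ring)

theorem sgnC {K : Type*} [Monoid K] [HasDistribNeg K] (i n : ℕ) (h : i ≤ n) :
    (-1 : K) ^ ((i + 1) * (n + 1)) * (-1 : K) ^ (n - i + 1)
      = -((-1 : K) ^ (n + 1) * (-1 : K) ^ ((i + 1) * n)) := by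
  obtain ⟨q, rfl⟩ : ∃ q, n = i + q := ⟨n - i, by omega⟩
  rw [show i + q - i = q by omega]
  rw [← pow_add, ← pow_add]
  exact npo' (c := 0) (by ring)

theorem sgnA {K : Type*} [Monoid K] [HasDistribNeg K] (i n : ℕ) (h1 : 1 ≤ i) (h2 : i ≤ n + 1) :
    (-1 : K) ^ ((i + 1) * (n + 1)) * (-1 : K) ^ (n + 1 - i + 1)
      = -(-1 : K) ^ ((i - 1 + 1) * n) := by
  obtain ⟨v, rfl⟩ : ∃ v, i = v + 1 := ⟨i - 1, by omega⟩
  obtain ⟨w, rfl⟩ : ∃ w, n = v + w := ⟨n - v, by omega⟩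
  rw [show v + w + 1 - (v + 1) = w by omega, show v + 1 - 1 = v by omega]
  rw [← pow_add]
  exact npo' (c := v + w + 1) (by ring)

theorem sgnB2 {K : Type*} [Monoid K] [HasDistribNeg K] (i q n : ℕ) (h : n + 2 ≤ i + q)
    (hi : i ≤ n + 1) (hq : q ≤ n) :
    (-1 : K) ^ ((i + 1) * (n + 1)) * (-1 : K) ^ (q + 1)
      = -((-1 : K) ^ (i + q - n - 2 + 1) * (-1 : K) ^ ((i - 1 + 1) * n)) := by
  obtain ⟨p, hp⟩ : ∃ p, i + q = n + 2 + p := ⟨i + q - n - 2, by omega⟩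
  obtain ⟨v, rfl⟩ : ∃ v, i = v + 1 := ⟨i - 1, by omega⟩
  obtain ⟨t, rfl⟩ : ∃ t, v = p + 1 + t := ⟨v - p - 1, by omega⟩
  obtain ⟨qq, hqq⟩ : ∃ qq, n = t + qq := ⟨n - t, by omega⟩
  have hq2 : q = qq := by omega
  subst hq2
  subst hqq
  rw [show p + 1 + t + 1 + q - (t + q) - 2 = p by omega,
    show p + 1 + t + 1 - 1 = p + 1 + t by omega]
  rw [← pow_add, ← pow_add]
  exact npo' (c := t + q + 1) (by ring)

theorem sgnT {K : Type*} [Monoid K] [HasDistribNeg K] (i n : ℕ) :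
    (-1 : K) ^ ((i + 1 + 1) * (n + 1)) * (-1 : K) ^ (n + 1 + 1)
      = -(-1 : K) ^ ((i + 1) * (n + 1)) := by
  rw [← pow_add]
  exact npo' (c := n + 1) (by ring)

theorem sgnTop {K : Type*} [Monoid K] [HasDistribNeg K] (n : ℕ) :
    (-1 : K) ^ ((n + 1 + 1) * (n + 1)) = 1 := by
  refine Even.neg_one_pow ?_
  have := Nat.even_mul_succ_self (n + 1)
  rwa [Nat.mul_comm] at this

theorem sgnBot {K : Type*} [Monoid K] [HasDistribNeg K] (n : ℕ) :
    (-1 : K) ^ ((0 + 1) * (n + 1)) * (-1 : K) ^ (n + 1 + 1) = -1 := by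
  rw [← pow_add]
  have := npo' (K := K) (A := (0 + 1) * (n + 1) + (n + 1 + 1)) (B := 0) (c := n + 1) (by ring)
  rw [this, pow_zero]

theorem cyc_congr [Ring R] {n : ℕ} (ν : R → R) (a : Fin n → R) (x : R)
    (I J I' J' : Fin (n + 1)) (h : I.val + J.val = I'.val + J'.val) :
    cycArr ν a x I J = cycArr ν a x I' J' := by
  simp only [cycArr]
  split_ifs <;>
    first
      | rfl
      | omega
      | (exact aux_a a _ _ _ _ (by omega))
      | (exact congrArg ν (aux_a a _ _ _ _ (by omega)))

theorem ev0 [Ring R] {n : ℕ} (ν : R → R) (a : Fin n → R) (x : R) (I : Fin (n + 1))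
    (h : I.val < n) : cycArr ν a x I 0 = a ⟨I.val, h⟩ := by
  simp only [cycArr, Fin.val_zero, add_zero]
  split_ifs <;> first | omega | (exact aux_a a _ _ _ _ (by omega))

theorem evx [Ring R] {n : ℕ} (ν : R → R) (a : Fin n → R) (x : R) (I : Fin (n + 1))
    (h : I.val = n) : cycArr ν a x I 0 = x := by
  simp only [cycArr, Fin.val_zero, add_zero]
  split_ifs <;> first | rfl | omega

theorem evLast [Ring R] {n : ℕ} (ν : R → R) (a : Fin n → R) (x : R) (I : Fin (n + 1))
    (h : 1 ≤ I.val) : cycArr ν a x I (Fin.last n) = ν (a ⟨I.val - 1, by omega⟩) := by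
  simp only [cycArr, Fin.val_last]
  split_ifs <;>
    first | omega | (exact congrArg ν (aux_a a _ _ _ _ (by omega)))

theorem evLast0 [Ring R] {n : ℕ} (ν : R → R) (a : Fin n → R) (x : R) (I : Fin (n + 1))
    (h : I.val = 0) : cycArr ν a x I (Fin.last n) = x := by
  simp only [cycArr, Fin.val_last]
  split_ifs <;> first | rfl | omega

theorem tailTop [Ring R] {n : ℕ} (ν : R → R) (a : Fin (n + 1) → R) (x : R) (I : Fin (n + 2))
    (h : I.val = n + 1) : (fun j : Fin (n + 1) => cycArr ν a x I j.succ) = fun j => ν (a j) := by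
  funext j
  simp only [cycArr, Fin.val_succ]
  split_ifs <;>
    first
      | omega
      | (exact congrArg ν (by
          have : (⟨I.val + (j.val + 1) - (n + 1 + 1), by omega⟩ : Fin (n+1)) = j := by
            apply Fin.ext; simp; omega
          rw [this]))

theorem init0 [Ring R] {n : ℕ} (ν : R → R) (a : Fin (n + 1) → R) (x : R) (I : Fin (n + 2))
    (h : I.val = 0) : (fun j : Fin (n + 1) => cycArr ν a x I j.castSucc) = a := by
  funext j
  simp only [cycArr, Fin.coe_castSucc]
  split_ifs <;>
    first
      | omega
      | (exact (by
          have : (⟨I.val + j.val, by omega⟩ : Fin (n+1)) = j := by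
            apply Fin.ext; show I.val + j.val = j.val; omega
          rw [this]))

/- Tuple lemmas describing `mergeAt` applied to cyclic arrangements. -/

theorem LC [Ring R] {n : ℕ} (ν : R → R) (a : Fin (n+1) → R) (x : R) (i : ℕ) (hi : i ≤ n) :
    mergeAt (cycArr ν a x ⟨i, by omega⟩) ⟨n - i, by omega⟩
      = cycArr ν (fun j => a j.castSucc) (a (Fin.last n) * x) ⟨i, by omega⟩ := by
  funext j
  simp only [mergeAt, cycArr, Fin.coe_castSucc, Fin.val_succ, Fin.castSucc_mk, Fin.succ_mk]
  split_ifs <;>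
    first
      | rfl
      | omega
      | (apply congrArg; apply Fin.ext; simp [Fin.last]; omega)
      | (congr 1 <;> first
          | (apply congrArg; apply Fin.ext; simp [Fin.last]; omega)
          | (apply Fin.ext; simp [Fin.last]; omega))

set_option maxHeartbeats 1000000 in
theorem LA [Ring R] {n : ℕ} (ν : R → R) (a : Fin (n+1) → R) (x : R) (i : ℕ)
    (h1 : 1 ≤ i) (hi : i ≤ n + 1) :
    mergeAt (cycArr ν a x ⟨i, by omega⟩) ⟨n + 1 - i, by omega⟩
      = cycArr ν (fun j => a j.succ) (x * ν (a 0)) ⟨i - 1, by omega⟩ := by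
  funext j
  simp only [mergeAt, cycArr, Fin.coe_castSucc, Fin.val_succ, Fin.castSucc_mk, Fin.succ_mk]
  split_ifs <;>
    first
      | rfl
      | omega
      | (apply congrArg; apply Fin.ext; simp [Fin.last]; omega)
      | (congr 1 <;> first
          | (apply congrArg; apply Fin.ext; simp [Fin.last]; omega)
          | (apply Fin.ext; simp [Fin.last]; omega)
          | (apply congrArg; apply congrArg; apply Fin.ext; simp [Fin.last]; omega))

set_option maxHeartbeats 1000000 in
theorem LB1 [Ring R] {n : ℕ} (ν : R → R) (a : Fin (n+1) → R) (x : R) (i q : ℕ)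
    (h : i + q + 1 ≤ n) :
    mergeAt (cycArr ν a x ⟨i, by omega⟩) ⟨q, by omega⟩
      = cycArr ν (mergeAt a ⟨i + q, by omega⟩) x ⟨i, by omega⟩ := by
  funext j
  simp only [mergeAt, cycArr, Fin.coe_castSucc, Fin.val_succ, Fin.castSucc_mk, Fin.succ_mk]
  split_ifs <;>
    first
      | rfl
      | omega
      | (apply congrArg; apply Fin.ext; simp [Fin.last]; omega)
      | (congr 1 <;> first
          | (apply congrArg; apply Fin.ext; simp [Fin.last]; omega)
          | (apply Fin.ext; simp [Fin.last]; omega))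

set_option maxHeartbeats 1000000 in
theorem LB2 [Ring R] {n : ℕ} (ν : R → R) (hmul : ∀ u v : R, ν (u * v) = ν u * ν v)
    (a : Fin (n+1) → R) (x : R) (i q : ℕ)
    (h : n + 2 ≤ i + q) (hi : i ≤ n + 1) (hq : q ≤ n) :
    mergeAt (cycArr ν a x ⟨i, by omega⟩) ⟨q, by omega⟩
      = cycArr ν (mergeAt a ⟨i + q - n - 2, by omega⟩) x ⟨i - 1, by omega⟩ := by
  funext j
  simp only [mergeAt, cycArr, Fin.coe_castSucc, Fin.val_succ, Fin.castSucc_mk, Fin.succ_mk]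
  split_ifs <;>
    first
      | rfl
      | omega
      | (apply congrArg; apply Fin.ext; simp [Fin.last]; omega)
      | (rw [hmul]; exact congrArg₂ (· * ·) (congrArg ν (aux_a a _ _ _ _ (by omega)))
          (congrArg ν (aux_a a _ _ _ _ (by omega))))
      | (congr 1 <;> first
          | (apply congrArg; apply Fin.ext; simp [Fin.last]; omega)
          | (apply Fin.ext; simp [Fin.last]; omega))

/- Index bijection -/

def phiF (n : ℕ) : Fin (n + 2) × Fin (n + 1) → Fin (n + 2) × Fin (n + 1) :=
  fun z =>
    if h1 : z.1.val + z.2.val < n then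
      (⟨z.1.val + z.2.val + 2, by omega⟩, ⟨z.1.val, by omega⟩)
    else if h2 : z.1.val + z.2.val = n then
      (⟨1, by omega⟩, ⟨z.1.val, by omega⟩)
    else if h3 : z.1.val + z.2.val = n + 1 then
      (⟨0, by omega⟩, ⟨z.1.val - 1, by have := z.1.isLt; omega⟩)
    else
      (⟨z.1.val + z.2.val - n, by have := z.1.isLt; have := z.2.isLt; omega⟩,
        ⟨z.1.val - 1, by have := z.1.isLt; omega⟩)

def psiF (n : ℕ) : Fin (n + 2) × Fin (n + 1) → Fin (n + 2) × Fin (n + 1) :=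
  fun w =>
    if w.1.val = 0 then (⟨w.2.val + 1, by have := w.2.isLt; omega⟩, ⟨n - w.2.val, by omega⟩)
    else if w.1.val = 1 then (⟨w.2.val, by have := w.2.isLt; omega⟩, ⟨n - w.2.val, by omega⟩)
    else if h3 : w.2.val + 2 ≤ w.1.val then
      (⟨w.2.val, by have := w.2.isLt; omega⟩,
        ⟨w.1.val - 2 - w.2.val, by have := w.1.isLt; omega⟩)
    else
      (⟨w.2.val + 1, by have := w.2.isLt; omega⟩,
        ⟨w.1.val + n - 1 - w.2.val, by have := w.1.isLt; omega⟩)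

theorem psi_phi (n : ℕ) (z : Fin (n + 2) × Fin (n + 1)) : psiF n (phiF n z) = z := by
  obtain ⟨⟨i, hi⟩, ⟨q, hq⟩⟩ := z
  simp only [phiF]
  split_ifs with h1 h2 h3 <;>
    (simp only [psiF]; split_ifs <;> simp_all [Prod.ext_iff, Fin.ext_iff] <;> omega)

theorem phi_psi (n : ℕ) (w : Fin (n + 2) × Fin (n + 1)) : phiF n (psiF n w) = w := by
  obtain ⟨⟨u, hu⟩, ⟨v, hv⟩⟩ := w
  simp only [psiF]
  split_ifs with h1 h2 h3 <;>
    (simp only [phiF]; split_ifs <;> simp_all [Prod.ext_iff, Fin.ext_iff] <;> omega)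

/-- The row encoding of the three groups of terms of `ε (δ(Δf)(a) ⋅ y)`. -/
def rowTerm [CommRing k] [Ring R] [Algebra k R] {n : ℕ} (ε : R →ₗ[k] k) (ν : R → R)
    (f : (Fin (n + 1) → R) → R) (a : Fin (n + 1) → R) (x : R)
    (u : Fin (n + 2)) (v : Fin (n + 1)) : k :=
  if u.val = 0 then
    (-1 : k) ^ ((v.val + 1) * n) * ε (f (cycArr ν (fun j => a j.succ) (x * ν (a 0)) v))
  else if u.val = 1 then
    ((-1 : k) ^ (n + 1) * (-1 : k) ^ ((v.val + 1) * n)) *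
      ε (f (cycArr ν (fun j => a j.castSucc) (a (Fin.last n) * x) v))
  else if h : 2 ≤ u.val then
    ((-1 : k) ^ (u.val - 2 + 1) * (-1 : k) ^ ((v.val + 1) * n)) *
      ε (f (cycArr ν (mergeAt a ⟨u.val - 2, by have := u.isLt; omega⟩) x v))
  else 0

/- ---------------------------------------------------------------------------
   Main theorem
--------------------------------------------------------------------------- -/

set_option maxHeartbeats 2000000 in
/-- for a `ν`-invariant cochain `f`, the Tradler operator `Δ` again
produces a `ν`-invariant cochain and satisfies `δ(Δf) = −Δ(δf)`; hence `Δ`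
induces a well-defined map `HH^n(R)^{ν↑} → HH^{n-1}(R)^{ν↑}`. -/
theorem delta_on_invariants [Field k] [Ring R] [Algebra k R]
    [FiniteDimensional k R] {n : ℕ} (ε : R →ₗ[k] k)
    (hnd : ∀ a : R, (∀ b : R, ε (a * b) = 0) → a = 0)
    (ν : R ≃ₐ[k] R) (hν : ∀ a b : R, ε (a * b) = ε (b * ν a))
    (f : MultilinearMap k (fun _ : Fin (n + 1) => R) R)
    (hfinv : twist ν (⇑f) = ⇑f)
    (Df : (Fin n → R) → R) (hDf : IsDeltaOf ε (⇑ν) (⇑f) Df)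
    (Ddf : (Fin (n + 1) → R) → R) (hDdf : IsDeltaOf ε (⇑ν) (hdiff (⇑f)) Ddf) :
    twist ν Df = Df ∧ ∀ a : Fin (n + 1) → R, hdiff Df a = - Ddf a := by
  have hεν : ∀ r : R, ε (ν r) = ε r := by
    intro r; have h := hν r 1; rw [mul_one, one_mul] at h; exact h.symm
  have hfν : ∀ c : Fin (n + 1) → R, f (fun j => ν (c j)) = ν (f c) := by
    intro c
    have h := congrFun hfinv c
    simp only [twist] at h
    conv_rhs => rw [← h]
    rw [AlgEquiv.apply_symm_apply]
  have hext : ∀ u v : R, (∀ y : R, ε (u * y) = ε (v * y)) → u = v := by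
    intro u v h
    have h0 : u - v = 0 := by
      apply hnd
      intro b
      rw [sub_mul, map_sub, h b, sub_self]
    rw [sub_eq_zero] at h0; exact h0
  have eps_pow : ∀ (m : ℕ) (w : R), ε ((-1 : R) ^ m * w) = (-1 : k) ^ m * ε w := by
    intro m w
    have h : ((-1 : R) ^ m) * w = ((-1 : k) ^ m) • w := by
      rw [Algebra.smul_def, map_pow, map_neg, map_one]
    rw [h, map_smul, smul_eq_mul]
  constructor
  · -- ν-invariance of Df
    funext c
    apply hext
    intro y
    have e1 : ε (twist ν Df c * y) = ε (Df (fun j => ν (c j)) * ν y) := by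
      simp only [twist]
      rw [hν (ν.symm (Df fun j => ν (c j))) y, AlgEquiv.apply_symm_apply,
        hν y (Df fun j => ν (c j))]
    rw [e1, hDf, hDf]
    apply Finset.sum_congr rfl
    intro i _
    congr 1
    have hc : cycArr (⇑ν) (fun j => ν (c j)) (ν y) i = fun j => ν (cycArr (⇑ν) c y i j) := by
      funext j; simp only [cycArr]; split_ifs <;> rfl
    rw [hc, hfν, hεν]
  · -- δ(Δf) = -Δ(δf)
    intro a
    have key : ∀ y : R, ε (hdiff Df a * y) + ε (Ddf a * y) = 0 := by
      intro y
      have H1 : ε (hdiff Df a * y)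
          = ∑ u : Fin (n + 2), ∑ v : Fin (n + 1), rowTerm ε (⇑ν) (⇑f) a y u v := by
        simp only [hdiff, add_mul, map_add, Finset.sum_mul, map_sum]
        rw [Fin.sum_univ_succ
          (f := fun u : Fin (n + 2) => ∑ v : Fin (n + 1), rowTerm ε (⇑ν) (⇑f) a y u v)]
        rw [Fin.sum_univ_succ
          (f := fun u : Fin (n + 1) => ∑ v : Fin (n + 1), rowTerm ε (⇑ν) (⇑f) a y u.succ v)]
        have hA : ε (a 0 * Df (fun j => a j.succ) * y)
            = ∑ v : Fin (n + 1), rowTerm ε (⇑ν) (⇑f) a y 0 v := by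
          rw [mul_assoc, hν (a 0) (Df (fun j => a j.succ) * y), mul_assoc, hDf]
          apply Finset.sum_congr rfl
          intro v _
          simp [rowTerm]
        have hC : ε ((-1 : R) ^ (n + 1) * (Df (fun j => a j.castSucc) * a (Fin.last n)) * y)
            = ∑ v : Fin (n + 1), rowTerm ε (⇑ν) (⇑f) a y (0 : Fin (n + 1)).succ v := by
          rw [mul_assoc ((-1 : R) ^ (n + 1)), eps_pow, mul_assoc,
            hDf (fun j => a j.castSucc) (a (Fin.last n) * y), Finset.mul_sum]
          apply Finset.sum_congr rfl
          intro v _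
          simp only [rowTerm, Fin.val_succ, Fin.val_zero]
          norm_num
          ring
        have hB : ∀ p : Fin n, ε ((-1 : R) ^ (p.val + 1) * Df (mergeAt a p) * y)
            = ∑ v : Fin (n + 1), rowTerm ε (⇑ν) (⇑f) a y p.succ.succ v := by
          intro p
          rw [mul_assoc, eps_pow, hDf (mergeAt a p) y, Finset.mul_sum]
          apply Finset.sum_congr rfl
          intro v _
          simp only [rowTerm, Fin.val_succ]
          rw [if_neg (by omega), if_neg (by omega), dif_pos (by omega)]
          rw [show p.val + 1 + 1 - 2 + 1 = p.val + 1 from by omega]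
          rw [show (⟨p.val + 1 + 1 - 2, by have := p.isLt; omega⟩ : Fin n) = p from
            Fin.ext (by show p.val + 1 + 1 - 2 = p.val; omega)]
          ring
        rw [hA, hC]
        rw [Finset.sum_congr rfl (fun p _ => hB p)]
        ring
      have H2 : ε (Ddf a * y)
          = -∑ u : Fin (n + 2), ∑ v : Fin (n + 1), rowTerm ε (⇑ν) (⇑f) a y u v := by
        rw [hDdf a y]
        have expand : ∀ i : Fin (n + 2),
            ε (hdiff (⇑f) (cycArr (⇑ν) a y i))
              = ε (cycArr (⇑ν) a y i 0 * f (fun j => cycArr (⇑ν) a y i j.succ))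
                + ((∑ q : Fin (n + 1),
                      (-1 : k) ^ (q.val + 1) * ε (f (mergeAt (cycArr (⇑ν) a y i) q)))
                  + (-1 : k) ^ (n + 1 + 1) *
                      ε (f (fun j => cycArr (⇑ν) a y i j.castSucc) *
                        cycArr (⇑ν) a y i (Fin.last (n + 1)))) := by
          intro i
          simp only [hdiff, map_add, map_sum, eps_pow]
          ring
        calc
          ∑ i : Fin (n + 2), (-1 : k) ^ ((i.val + 1) * (n + 1)) *
              ε (hdiff (⇑f) (cycArr (⇑ν) a y i))
            = ∑ i : Fin (n + 2),
                ((-1 : k) ^ ((i.val + 1) * (n + 1)) *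
                    ε (cycArr (⇑ν) a y i 0 * f (fun j => cycArr (⇑ν) a y i j.succ))
                  + (((-1 : k) ^ ((i.val + 1) * (n + 1)) *
                        ∑ q : Fin (n + 1),
                          (-1 : k) ^ (q.val + 1) * ε (f (mergeAt (cycArr (⇑ν) a y i) q)))
                    + (-1 : k) ^ ((i.val + 1) * (n + 1)) *
                        ((-1 : k) ^ (n + 1 + 1) *
                          ε (f (fun j => cycArr (⇑ν) a y i j.castSucc) *
                            cycArr (⇑ν) a y i (Fin.last (n + 1)))))) := by
              refine Finset.sum_congr rfl fun i _ => ?_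
              rw [expand i]; ring
          _ = (∑ i : Fin (n + 2), (-1 : k) ^ ((i.val + 1) * (n + 1)) *
                  ε (cycArr (⇑ν) a y i 0 * f (fun j => cycArr (⇑ν) a y i j.succ)))
              + ((∑ i : Fin (n + 2), (-1 : k) ^ ((i.val + 1) * (n + 1)) *
                    ∑ q : Fin (n + 1),
                      (-1 : k) ^ (q.val + 1) * ε (f (mergeAt (cycArr (⇑ν) a y i) q)))
                + ∑ i : Fin (n + 2), (-1 : k) ^ ((i.val + 1) * (n + 1)) *
                    ((-1 : k) ^ (n + 1 + 1) *
                      ε (f (fun j => cycArr (⇑ν) a y i j.castSucc) *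
                        cycArr (⇑ν) a y i (Fin.last (n + 1))))) := by
              rw [Finset.sum_add_distrib, Finset.sum_add_distrib]
          _ = -∑ u : Fin (n + 2), ∑ v : Fin (n + 1), rowTerm ε (⇑ν) (⇑f) a y u v := by
              have hMain : (∑ i : Fin (n + 2), (-1 : k) ^ ((i.val + 1) * (n + 1)) *
                    ∑ q : Fin (n + 1),
                      (-1 : k) ^ (q.val + 1) * ε (f (mergeAt (cycArr (⇑ν) a y i) q)))
                  = -∑ u : Fin (n + 2), ∑ v : Fin (n + 1), rowTerm ε (⇑ν) (⇑f) a y u v := by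
                rw [show (∑ u : Fin (n + 2), ∑ v : Fin (n + 1), rowTerm ε (⇑ν) (⇑f) a y u v)
                    = ∑ w : Fin (n + 2) × Fin (n + 1), rowTerm ε (⇑ν) (⇑f) a y w.1 w.2 from
                  (Fintype.sum_prod_type' _).symm]
                simp only [Finset.mul_sum]
                rw [show (∑ i : Fin (n + 2), ∑ q : Fin (n + 1),
                      (-1 : k) ^ ((i.val + 1) * (n + 1)) *
                        ((-1 : k) ^ (q.val + 1) * ε (f (mergeAt (cycArr (⇑ν) a y i) q))))
                    = ∑ z : Fin (n + 2) × Fin (n + 1),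
                        (-1 : k) ^ ((z.1.val + 1) * (n + 1)) *
                          ((-1 : k) ^ (z.2.val + 1) *
                            ε (f (mergeAt (cycArr (⇑ν) a y z.1) z.2))) from
                  (Fintype.sum_prod_type' _).symm]
                rw [← Finset.sum_neg_distrib]
                refine Finset.sum_nbij' (phiF n) (psiF n) (fun _ _ => mem_univ _)
                  (fun _ _ => mem_univ _) (fun z _ => psi_phi n z) (fun w _ => phi_psi n w) ?_
                rintro ⟨⟨i, hi⟩, ⟨q, hq⟩⟩ -
                simp only [phiF]
                by_cases h1 : i + q < n
                · rw [dif_pos h1]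
                  dsimp only
                  rw [LB1 (⇑ν) a y i q (by omega)]
                  simp only [rowTerm]
                  rw [if_neg (by omega), if_neg (by omega), dif_pos (by omega)]
                  rw [show i + q + 2 - 2 + 1 = i + q + 1 from by omega]
                  rw [show (⟨i + q + 2 - 2, by omega⟩ : Fin n) = ⟨i + q, by omega⟩ from
                    Fin.ext (by show i + q + 2 - 2 = i + q; omega)]
                  rw [← mul_assoc, sgnB1 i q n]
                  ring
                · by_cases h2 : i + q = n
                  · rw [dif_neg (by omega), dif_pos h2]
                    dsimp only
                    have hq' : q = n - i := by omega
                    subst hq'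
                    rw [LC (⇑ν) a y i (by omega)]
                    simp only [rowTerm]
                    rw [if_neg (by omega), if_true]
                    rw [← mul_assoc, sgnC i n (by omega)]
                    ring
                  · by_cases h3 : i + q = n + 1
                    · rw [dif_neg (by omega), dif_neg (by omega), dif_pos h3]
                      dsimp only
                      have hq' : q = n + 1 - i := by omega
                      subst hq'
                      rw [LA (⇑ν) a y i (by omega) (by omega)]
                      simp only [rowTerm]
                      try rw [if_true]
                      rw [← mul_assoc, sgnA i n (by omega) (by omega)]
                      ring
                    · rw [dif_neg (by omega), dif_neg (by omega), dif_neg (by omega)]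
                      dsimp only
                      rw [LB2 (⇑ν) (map_mul ν) a y i q (by omega) (by omega) (by omega)]
                      simp only [rowTerm]
                      rw [if_neg (by omega), if_neg (by omega), dif_pos (by omega)]
                      rw [← mul_assoc, sgnB2 i q n (by omega) (by omega) (by omega)]
                      ring
              have hT : (∑ i : Fin (n + 2), (-1 : k) ^ ((i.val + 1) * (n + 1)) *
                    ε (cycArr (⇑ν) a y i 0 * f (fun j => cycArr (⇑ν) a y i j.succ)))
                  + (∑ i : Fin (n + 2), (-1 : k) ^ ((i.val + 1) * (n + 1)) *
                      ((-1 : k) ^ (n + 1 + 1) *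
                        ε (f (fun j => cycArr (⇑ν) a y i j.castSucc) *
                          cycArr (⇑ν) a y i (Fin.last (n + 1))))) = 0 := by
                rw [Fin.sum_univ_castSucc
                  (f := fun i : Fin (n + 2) => (-1 : k) ^ ((i.val + 1) * (n + 1)) *
                    ε (cycArr (⇑ν) a y i 0 * f (fun j => cycArr (⇑ν) a y i j.succ)))]
                rw [Fin.sum_univ_succ
                  (f := fun i : Fin (n + 2) => (-1 : k) ^ ((i.val + 1) * (n + 1)) *
                    ((-1 : k) ^ (n + 1 + 1) *
                      ε (f (fun j => cycArr (⇑ν) a y i j.castSucc) *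
                        cycArr (⇑ν) a y i (Fin.last (n + 1)))))]
                have hS : (∑ i : Fin (n + 1),
                      (-1 : k) ^ ((i.castSucc.val + 1) * (n + 1)) *
                        ε (cycArr (⇑ν) a y i.castSucc 0 *
                          f (fun j => cycArr (⇑ν) a y i.castSucc j.succ)))
                    + (∑ i : Fin (n + 1),
                        (-1 : k) ^ ((i.succ.val + 1) * (n + 1)) *
                          ((-1 : k) ^ (n + 1 + 1) *
                            ε (f (fun j => cycArr (⇑ν) a y i.succ j.castSucc) *
                              cycArr (⇑ν) a y i.succ (Fin.last (n + 1))))) = 0 := by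
                  rw [← Finset.sum_add_distrib]
                  apply Finset.sum_eq_zero
                  intro i _
                  have t1 : (fun j : Fin (n + 1) => cycArr (⇑ν) a y i.succ j.castSucc)
                      = (fun j => cycArr (⇑ν) a y i.castSucc j.succ) := by
                    funext j
                    exact cyc_congr (⇑ν) a y _ _ _ _
                      (by simp only [Fin.val_succ, Fin.coe_castSucc]; omega)
                  have t2 : cycArr (⇑ν) a y i.succ (Fin.last (n + 1)) = ν (a i) := by
                    simp only [cycArr, Fin.val_succ, Fin.val_last]
                    split_ifs <;>
                      first
                        | omega
                        | (exact congrArg ν (by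
                            have h9 : (⟨i.val + 1 + (n + 1) - (n + 1 + 1),
                                by have := i.isLt; omega⟩ : Fin (n + 1)) = i :=
                              Fin.ext (by show i.val + 1 + (n + 1) - (n + 1 + 1) = i.val; omega)
                            rw [h9]))
                  have t3 : cycArr (⇑ν) a y i.castSucc 0 = a i := by
                    rw [ev0 (⇑ν) a y i.castSucc (by simpa using i.isLt)]
                    exact congrArg a (Fin.ext (by simp))
                  rw [t1, t2, t3]
                  rw [hν (a i) (f fun j => cycArr (⇑ν) a y i.castSucc j.succ)]
                  simp only [Fin.coe_castSucc, Fin.val_succ]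
                  rw [← mul_assoc, sgnT i.val n]
                  ring
                have tb1 : (-1 : k) ^ (((Fin.last (n + 1)).val + 1) * (n + 1)) *
                    ε (cycArr (⇑ν) a y (Fin.last (n + 1)) 0 *
                      f (fun j => cycArr (⇑ν) a y (Fin.last (n + 1)) j.succ))
                    = ε (f a * y) := by
                  rw [evx (⇑ν) a y (Fin.last (n + 1)) (by simp [Fin.val_last])]
                  rw [tailTop (⇑ν) a y (Fin.last (n + 1)) (by simp [Fin.val_last])]
                  rw [hfν a]
                  rw [show ε (y * ν (f a)) = ε (f a * y) from (hν (f a) y).symm]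
                  simp only [Fin.val_last]
                  rw [sgnTop n, one_mul]
                have tb2 : (-1 : k) ^ (((0 : Fin (n + 2)).val + 1) * (n + 1)) *
                    ((-1 : k) ^ (n + 1 + 1) *
                      ε (f (fun j => cycArr (⇑ν) a y (0 : Fin (n + 2)) j.castSucc) *
                        cycArr (⇑ν) a y (0 : Fin (n + 2)) (Fin.last (n + 1))))
                    = -ε (f a * y) := by
                  rw [init0 (⇑ν) a y (0 : Fin (n + 2)) (by simp)]
                  rw [evLast0 (⇑ν) a y (0 : Fin (n + 2)) (by simp)]
                  simp only [Fin.val_zero]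
                  rw [← mul_assoc, sgnBot n]
                  ring
                linear_combination hS + tb1 + tb2
              linear_combination hT + hMain
      rw [H1, H2]
      ring
    apply hext
    intro y
    rw [neg_mul, map_neg]
    linear_combination key y
end
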